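/- Let k ≥ 1 and u, y : Fin k → ℕ with ∑_{l ≤ j} u l ≤ ∑_{l ≤ j} y l for all j. Define V(u,y) = { v : Fin k → ℕ | ∀ j, v j ≤ y j; ∀ j < k, ∑_{l ≤ j} u l ≤ ∑_{l ≤ j} v l; and ∑_{l=1}^k v l = ∑_{l=1}^k u l }. For any v ∈ V(u,y) with v ≠ v* (where v* is defined by the top-down recursion v*(k)=min(u k, y k), v*(j)=min(y j, u j + ∑_{l>j}u l − ∑_{l>j}v* l)), letting j be the largest index with v j ≠ v* j, we have v j < v* j. -/

import Mathlib

/-- For any `v ∈ V(u,y)` with `v ≠ v*`, at the largest index `j` where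
`v j ≠ v* j` we must have `v j < v* j`. Here `v*` is the top-down recursive solution. -/
theorem stmt3 (k : ℕ) (hk : 1 ≤ k) (u y v vstar : Fin k → ℕ)
    (hu : ∀ j : Fin k, (∑ l ∈ Finset.Iic j, u l) ≤ (∑ l ∈ Finset.Iic j, y l))
    (hvstar : ∀ j : Fin k,
      vstar j = min (y j)
        (u j + ((∑ l ∈ Finset.Ioi j, u l) - (∑ l ∈ Finset.Ioi j, vstar l))))
    (hv1 : ∀ j : Fin k, v j ≤ y j)
    (hv2 : ∀ j : Fin k, (∑ l ∈ Finset.Iic j, u l) ≤ (∑ l ∈ Finset.Iic j, v l))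
    (hv3 : (∑ l : Fin k, v l) = (∑ l : Fin k, u l))
    (hne : v ≠ vstar)
    (j : Fin k) (hj : v j ≠ vstar j) (hjmax : ∀ l : Fin k, j < l → v l = vstar l) :
    v j < vstar j := by
  classical
  set S' := ∑ l ∈ Finset.Iio j, v l with hS'
  set T' := ∑ l ∈ Finset.Iio j, u l with hT'
  set A := ∑ l ∈ Finset.Ioi j, u l with hA
  set B := ∑ l ∈ Finset.Ioi j, vstar l with hB
  have hBv : (∑ l ∈ Finset.Ioi j, v l) = B := by
    apply Finset.sum_congr rfl
    intro l hl
    exact hjmax l (Finset.mem_Ioi.mp hl)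
  have hIic : Finset.Iic j = insert j (Finset.Iio j) := by
    ext l; simp [Finset.mem_Iic, Finset.mem_Iio, le_iff_lt_or_eq, or_comm]
  have hsv : (∑ l ∈ Finset.Iic j, v l) = v j + S' := by
    rw [hIic, Finset.sum_insert (by simp)]
  have hsu : (∑ l ∈ Finset.Iic j, u l) = u j + T' := by
    rw [hIic, Finset.sum_insert (by simp)]
  have hsplit : ∀ f : Fin k → ℕ,
      (∑ l : Fin k, f l) = (∑ l ∈ Finset.Iic j, f l) + (∑ l ∈ Finset.Ioi j, f l) := by
    intro f
    rw [← Finset.sum_union (by simp [Finset.disjoint_left])]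
    congr 1
    ext l; simp [le_or_gt]
  have htot : v j + S' + B = u j + T' + A := by
    have := hv3
    rw [hsplit v, hsplit u, hsv, hsu, hBv] at this
    exact this
  have hT'S' : T' ≤ S' := by
    by_cases h0 : (j : ℕ) = 0
    · have : Finset.Iio j = ∅ := by
        ext l; simp [Finset.mem_Iio, Fin.lt_def, h0]
      simp [hT', hS', this]
    · have hkpos : (j : ℕ) - 1 < k := by omega
      set i : Fin k := ⟨(j : ℕ) - 1, hkpos⟩
      have hIio : Finset.Iio j = Finset.Iic i := by
        ext l; simp only [Finset.mem_Iio, Finset.mem_Iic, Fin.lt_def, Fin.le_def, Fin.val_mk]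
        have hi : (i : ℕ) = (j : ℕ) - 1 := rfl
        omega
      rw [hT', hS', hIio]
      exact hv2 i
  have hTS : u j + T' ≤ v j + S' := by
    have := hv2 j
    rwa [hsv, hsu] at this
  have hmin := hvstar j
  rw [← hA, ← hB] at hmin
  have hvy := hv1 j
  omega
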